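/- Let G be the presented group on three generators x, y, z with relators x², y³, and x·y·z⁻⁶ (i.e. G = PresentedGroup R where R = {(of 0)², (of 1)³, of 0 · of 1 · (of 2)⁻⁶} ⊆ FreeGroup (Fin 3)). Then the quotient of G by the normal closure of the set of its torsion elements is NOT torsion-free: the quotient G/⟪{g : G | IsOfFinOrder g}⟫ contains a nontrivial element of finite order. -/

import Mathlib

open Monoid Multiplicative

/-- The relators `x²`, `y³`, `x·y·z⁻⁶` on three generators. -/
def chiVyaRels : Set (FreeGroup (Fin 3)) :=
  {FreeGroup.of 0 ^ 2, FreeGroup.of 1 ^ 3,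
    FreeGroup.of 0 * FreeGroup.of 1 * (FreeGroup.of 2) ^ (-6 : ℤ)}

namespace ChiVya
abbrev C2 := Multiplicative (ZMod 2)
abbrev C3 := Multiplicative (ZMod 3)
abbrev Fac2 : Bool → Type := fun b => bif b then C3 else C2
instance instGroupFac2 : (b : Bool) → Group (Fac2 b)
  | false => inferInstanceAs (Group C2)
  | true => inferInstanceAs (Group C3)
abbrev A := Monoid.CoprodI Fac2
abbrev B := Multiplicative ℤ
def a0 : Fac2 false := ofAdd (1 : ZMod 2)
def b0 : Fac2 true := ofAdd (1 : ZMod 3)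
def w0 : A := CoprodI.of a0 * CoprodI.of b0

instance instDecEqFac2 : (b : Bool) → DecidableEq (Fac2 b)
  | false => inferInstanceAs (DecidableEq C2)
  | true => inferInstanceAs (DecidableEq C3)

lemma a0_ne_one : a0 ≠ 1 := by
  show (ofAdd (1 : ZMod 2) : C2) ≠ 1
  decide

lemma b0_ne_one : b0 ≠ 1 := by
  show (ofAdd (1 : ZMod 3) : C3) ≠ 1
  decide

def listAB : ℕ → List (Σ b, Fac2 b)
  | 0 => []
  | n+1 => ⟨false, a0⟩ :: ⟨true, b0⟩ :: listAB n

lemma listAB_ne_one (n : ℕ) : ∀ l ∈ listAB n, Sigma.snd l ≠ 1 := by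
  induction n with
  | zero => simp [listAB]
  | succ n ih =>
    intro l hl
    simp only [listAB, List.mem_cons] at hl
    rcases hl with rfl | rfl | hl
    · exact a0_ne_one
    · exact b0_ne_one
    · exact ih l hl

lemma listAB_chain (n : ℕ) :
    (listAB n).Chain' fun l l' => Sigma.fst l ≠ Sigma.fst l' := by
  induction n with
  | zero => simp [listAB, List.Chain']
  | succ n ih =>
    refine List.IsChain.cons_cons (by simp) ?_
    cases n with
    | zero => simp [listAB]
    | succ m => exact List.IsChain.cons_cons (by simp [listAB]) (by simpa [listAB, List.Chain'] using ih)

def wAB (n : ℕ) : CoprodI.Word Fac2 :=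
  ⟨listAB n, listAB_ne_one n, listAB_chain n⟩

lemma prod_wAB (n : ℕ) : (wAB n).prod = w0 ^ n := by
  suffices h : ∀ n, ((listAB n).map fun l => CoprodI.of l.snd).prod = w0 ^ n by
    exact h n
  intro m
  induction m with
  | zero => simp [listAB]
  | succ k ih =>
    rw [pow_succ']
    simp only [listAB, List.map_cons, List.prod_cons, ih, w0, mul_assoc]

lemma w0_pow_ne_one (n : ℕ) (hn : n ≠ 0) : w0 ^ n ≠ 1 := by
  intro h
  have h2 : (wAB n).prod = (CoprodI.Word.empty : CoprodI.Word Fac2).prod := by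
    rw [prod_wAB, h, CoprodI.Word.prod_empty]
  have h3 : wAB n = CoprodI.Word.empty :=
    (CoprodI.Word.equiv (M := Fac2)).symm.injective h2
  have h4 : listAB n = [] := congrArg CoprodI.Word.toList h3
  cases n with
  | zero => exact hn rfl
  | succ m => simp [listAB] at h4

lemma w0_zpow_ne_one (k : ℤ) (hk : k ≠ 0) : w0 ^ k ≠ 1 := by
  rcases lt_trichotomy k 0 with h | h | h
  · intro hh
    have : w0 ^ (-k) = 1 := by
      rw [zpow_neg, hh, inv_one]
    have hnk : (0:ℤ) < -k := by omega
    obtain ⟨m, hm⟩ := Int.eq_ofNat_of_zero_le hnk.le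
    rw [hm, zpow_natCast] at this
    exact w0_pow_ne_one m (by omega) this
  · exact absurd h hk
  · intro hh
    obtain ⟨m, hm⟩ := Int.eq_ofNat_of_zero_le h.le
    rw [hm, zpow_natCast] at hh
    exact w0_pow_ne_one m (by omega) hh


abbrev Fac : Bool → Type := fun b => bif b then B else A

instance instGroupFac : (b : Bool) → Group (Fac b)
  | false => inferInstanceAs (Group A)
  | true => inferInstanceAs (Group B)

def phi : (b : Bool) → (Multiplicative ℤ →* Fac b)
  | false => zpowersHom A w0
  | true => zpowersHom B (ofAdd (6 : ℤ))

lemma phi_inj : ∀ b, Function.Injective (phi b) := by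
  intro b
  cases b with
  | false =>
    intro s t h
    have h' : w0 ^ (toAdd s) = w0 ^ (toAdd t) := h
    by_contra hst
    have : toAdd s - toAdd t ≠ 0 := by
      intro h0
      apply hst
      have : toAdd s = toAdd t := by omega
      exact toAdd.injective this
    exact w0_zpow_ne_one _ this (by rw [zpow_sub, h', mul_inv_cancel])
  | true =>
    intro s t h
    have h' : (ofAdd (6:ℤ)) ^ (toAdd s) = (ofAdd (6:ℤ)) ^ (toAdd t) := h
    have h'' : (6:ℤ) * toAdd s = 6 * toAdd t := by
      have := congrArg toAdd h'
      simpa [toAdd_zpow, mul_comm] using this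
    have : toAdd s = toAdd t := by omega
    exact toAdd.injective this

abbrev P := PushoutI phi

def ofA : A →* P := PushoutI.of (φ := phi) false
def ofB : B →* P := PushoutI.of (φ := phi) true


open PushoutI

def eval (l : List (Σ b, Fac b)) : P :=
  (l.map fun p => PushoutI.of (φ := phi) p.1 p.2).prod

lemma eval_nil : eval [] = 1 := rfl

lemma eval_cons (p : Σ b, Fac b) (l : List (Σ b, Fac b)) :
    eval (p :: l) = PushoutI.of (φ := phi) p.1 p.2 * eval l := by
  simp [eval]

lemma eval_append (l1 l2 : List (Σ b, Fac b)) :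
    eval (l1 ++ l2) = eval l1 * eval l2 := by
  simp [eval]

lemma eval_singleton (p : Σ b, Fac b) : eval [p] = PushoutI.of (φ := phi) p.1 p.2 := by
  simp [eval]

lemma eval_surj (g : P) : ∃ l, eval l = g := by
  induction g using PushoutI.induction_on with
  | of i g => exact ⟨[⟨i, g⟩], eval_singleton _⟩
  | base h =>
    refine ⟨[⟨false, phi false h⟩], ?_⟩
    rw [eval_singleton]
    exact of_apply_eq_base phi false h
  | mul x y hx hy =>
    obtain ⟨l1, h1⟩ := hx
    obtain ⟨l2, h2⟩ := hy
    exact ⟨l1 ++ l2, by rw [eval_append, h1, h2]⟩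

def IsRed (l : List (Σ b, Fac b)) : Prop :=
  (l.Chain' fun p q => p.1 ≠ q.1) ∧ ∀ p ∈ l, p.2 ∉ (phi p.1).range

lemma base_eq_of (h : Multiplicative ℤ) (j : Bool) :
    PushoutI.base phi h = PushoutI.of (φ := phi) j (phi j h) :=
  (of_apply_eq_base phi j h).symm

/-- Normalization: every list evaluates either to an element of a factor, or to the same
value as a reduced list of length at least 2. -/
lemma norm : ∀ (n : ℕ) (l : List (Σ b, Fac b)), l.length ≤ n →
    (∃ i x, eval l = PushoutI.of (φ := phi) i x) ∨
    (∃ r, eval r = eval l ∧ r.length ≤ l.length ∧ IsRed r ∧ 2 ≤ r.length) := by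
  intro n
  induction n with
  | zero =>
    intro l hl
    have : l = [] := List.length_eq_zero_iff.1 (Nat.le_zero.1 hl)
    subst this
    exact Or.inl ⟨false, 1, by rw [eval_nil, map_one]⟩
  | succ n ih =>
    intro l hl
    match l with
    | [] => exact Or.inl ⟨false, 1, by rw [eval_nil, map_one]⟩
    | [a] => exact Or.inl ⟨a.1, a.2, eval_singleton a⟩
    | ⟨i, xa⟩ :: b :: t =>
      have htn : (b :: t).length ≤ n := by
        simp only [List.length_cons] at hl ⊢; omega
      have hevall : eval (⟨i, xa⟩ :: b :: t) =
          PushoutI.of (φ := phi) i xa * eval (b :: t) := eval_cons _ _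
      rcases ih (b :: t) htn with ⟨j, x, hx⟩ | ⟨r, hre, hrl, hred, hr2⟩
      · -- tail is a single factor element
        by_cases hij : i = j
        · subst hij
          exact Or.inl ⟨i, xa * x, by rw [hevall, hx, map_mul]⟩
        · by_cases hra : xa ∈ (phi i).range
          · obtain ⟨h, hh⟩ := hra
            refine Or.inl ⟨j, phi j h * x, ?_⟩
            rw [hevall, hx, ← hh, of_apply_eq_base phi i h, base_eq_of h j, map_mul]
          · by_cases hrx : x ∈ (phi j).range
            · obtain ⟨h, hh⟩ := hrx
              refine Or.inl ⟨i, xa * phi i h, ?_⟩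
              rw [hevall, hx, ← hh, of_apply_eq_base phi j h, base_eq_of h i, map_mul]
            · refine Or.inr ⟨[⟨i, xa⟩, ⟨j, x⟩], ?_, by simp, ⟨?_, ?_⟩, by simp⟩
              · rw [hevall, hx, eval_cons, eval_singleton]
              · exact List.isChain_pair.2 hij
              · intro p hp
                simp only [List.mem_cons, List.not_mem_nil, or_false] at hp
                rcases hp with rfl | rfl
                · exact hra
                · exact hrx
      · -- tail is reduced of length ≥ 2
        match r, hr2, hre, hrl, hred with
        | ⟨jb, xb⟩ :: r', hr2, hre, hrl, hred =>
        have hrecons : eval (⟨jb, xb⟩ :: r') =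
            PushoutI.of (φ := phi) jb xb * eval r' := eval_cons _ _
        by_cases hra : xa ∈ (phi i).range
        · obtain ⟨h, hh⟩ := hra
          have hnew : eval (⟨jb, phi jb h * xb⟩ :: r') = eval (⟨i, xa⟩ :: b :: t) := by
            rw [hevall, ← hre, hrecons, eval_cons, ← hh, of_apply_eq_base phi i h,
              base_eq_of h jb, map_mul, mul_assoc]
          have hlen : (⟨jb, phi jb h * xb⟩ :: r').length ≤ n := by
            simp only [List.length_cons] at htn hrl ⊢
            omega
          rcases ih _ hlen with ⟨j, x, hx⟩ | ⟨r'', h1, h2, h3, h4⟩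
          · exact Or.inl ⟨j, x, by rw [← hnew, hx]⟩
          · refine Or.inr ⟨r'', by rw [h1, hnew], ?_, h3, h4⟩
            simp only [List.length_cons] at htn hrl h2 ⊢
            omega
        · by_cases hij : i = jb
          · subst hij
            have hnew : eval (⟨i, xa * xb⟩ :: r') = eval (⟨i, xa⟩ :: b :: t) := by
              rw [hevall, ← hre, hrecons, eval_cons, map_mul, mul_assoc]
            have hlen : (⟨i, xa * xb⟩ :: r').length ≤ n := by
              simp only [List.length_cons] at htn hrl ⊢
              omega
            rcases ih _ hlen with ⟨j, x, hx⟩ | ⟨r'', h1, h2, h3, h4⟩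
            · exact Or.inl ⟨j, x, by rw [← hnew, hx]⟩
            · refine Or.inr ⟨r'', by rw [h1, hnew], ?_, h3, h4⟩
              simp only [List.length_cons] at htn hrl h2 ⊢
              omega
          · refine Or.inr ⟨⟨i, xa⟩ :: ⟨jb, xb⟩ :: r', ?_, ?_, ⟨?_, ?_⟩, by simp⟩
            · rw [hevall, ← hre, eval_cons]
            · simp only [List.length_cons] at htn hrl ⊢
              omega
            · exact List.IsChain.cons_cons hij hred.1
            · intro p hp
              rcases List.mem_cons.1 hp with rfl | hp
              · exact hra
              · exact hred.2 p hp


def lrep (r : List (Σ b, Fac b)) : ℕ → List (Σ b, Fac b)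
  | 0 => []
  | n+1 => r ++ lrep r n

lemma eval_lrep (r : List (Σ b, Fac b)) (n : ℕ) : eval (lrep r n) = (eval r) ^ n := by
  induction n with
  | zero => simp [lrep, eval_nil]
  | succ k ih => rw [lrep, eval_append, ih, pow_succ']

lemma mem_lrep {r : List (Σ b, Fac b)} {n : ℕ} {p} (hp : p ∈ lrep r n) : p ∈ r := by
  induction n with
  | zero => simp [lrep] at hp
  | succ k ih =>
    rcases List.mem_append.1 hp with h | h
    · exact h
    · exact ih h

lemma head?_lrep {r : List (Σ b, Fac b)} (hr : r ≠ []) {n : ℕ} (hn : 0 < n) :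
    (lrep r n).head? = r.head? := by
  cases n with
  | zero => omega
  | succ k =>
    show (r ++ lrep r k).head? = r.head?
    rw [List.head?_append_of_ne_nil _ hr]

lemma lrep_chain {b c : Σ i, Fac i} {m : List (Σ i, Fac i)}
    (hbc : b.1 ≠ c.1) (hch : ((b :: m) ++ [c]).Chain' fun p q => p.1 ≠ q.1) (n : ℕ) :
    (lrep ((b :: m) ++ [c]) n).Chain' fun p q => p.1 ≠ q.1 := by
  induction n with
  | zero => simp [lrep, List.Chain']
  | succ k ih =>
    rw [lrep]
    refine List.isChain_append.2 ⟨hch, ih, ?_⟩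
    intro x hx y hy
    have hx' : x = c := by
      rw [List.getLast?_concat] at hx
      exact (Option.some_inj.1 hx).symm
    subst hx'
    cases k with
    | zero => simp [lrep] at hy
    | succ kk =>
      rw [head?_lrep (by simp) (Nat.succ_pos _)] at hy
      have hy' : y = b := by
        simp at hy
        exact hy.symm
      subst hy'
      exact fun hh => hbc hh.symm

lemma growth {b c : Σ i, Fac i} {m : List (Σ i, Fac i)}
    (hbc : b.1 ≠ c.1) (hred : IsRed ((b :: m) ++ [c])) :
    ∀ n : ℕ, 0 < n → eval ((b :: m) ++ [c]) ^ n ≠ 1 := by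
  intro n hn hone
  set r := (b :: m) ++ [c] with hr
  have hne1 : ∀ p ∈ lrep r n, p.2 ≠ 1 := by
    intro p hp h1
    exact hred.2 p (mem_lrep hp) (h1 ▸ (phi p.1).range.one_mem)
  let W : CoprodI.Word Fac := ⟨lrep r n, fun p hp => hne1 p hp, lrep_chain hbc hred.1 n⟩
  have hWred : PushoutI.Reduced phi W := fun p hp => hred.2 p (mem_lrep hp)
  have hprod : PushoutI.ofCoprodI W.prod = eval (lrep r n) := by
    show PushoutI.ofCoprodI (((lrep r n).map fun l => CoprodI.of l.snd).prod) = _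
    rw [map_list_prod, List.map_map]
    rfl
  have hmem : PushoutI.ofCoprodI W.prod ∈ (PushoutI.base phi).range := by
    rw [hprod, eval_lrep, hone]
    exact ⟨1, map_one _⟩
  have hempty := PushoutI.Reduced.eq_empty_of_mem_range phi_inj hWred hmem
  have : lrep r n = [] := congrArg CoprodI.Word.toList hempty
  cases n with
  | zero => omega
  | succ k => simp [lrep, hr] at this

lemma conjpow (u g : P) (k : ℕ) : (u⁻¹ * g * u) ^ k = u⁻¹ * g ^ k * u := by
  induction k with
  | zero => simp
  | succ k ih => rw [pow_succ, ih, pow_succ]; group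

lemma torsion_aux : ∀ (n : ℕ) (l : List (Σ b, Fac b)), l.length ≤ n →
    IsOfFinOrder (eval l) →
    ∃ (i : Bool) (x : Fac i) (u : P), eval l = u * PushoutI.of (φ := phi) i x * u⁻¹ := by
  intro n
  induction n with
  | zero =>
    intro l hl _
    have : l = [] := List.length_eq_zero_iff.1 (Nat.le_zero.1 hl)
    subst this
    exact ⟨false, 1, 1, by rw [eval_nil, map_one, mul_one, inv_one, mul_one]⟩
  | succ n ih =>
    intro l hl hfin
    rcases norm (n+1) l hl with ⟨i, x, hx⟩ | ⟨r, hre, hrl, hred, hr2⟩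
    · exact ⟨i, x, 1, by rw [hx, one_mul, inv_one, mul_one]⟩
    · match r, hre, hrl, hred, hr2 with
      | bb :: r', hre, hrl, hred, hr2 =>
      rcases List.eq_nil_or_concat' r' with rfl | ⟨m, cc, rfl⟩
      · simp at hr2
      · by_cases hbc : bb.1 = cc.1
        · -- cyclically reduce
          obtain ⟨ib, xb⟩ := bb
          obtain ⟨ic, xc⟩ := cc
          have hbc' : ib = ic := hbc
          subst hbc'
          have hconj : (PushoutI.of (φ := phi) ib xb)⁻¹ * eval l * (PushoutI.of (φ := phi) ib xb)
              = eval (m ++ [⟨ib, xc * xb⟩]) := by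
            rw [← hre]
            show _ * eval ((⟨ib, xb⟩ :: m) ++ [⟨ib, xc⟩]) * _ = _
            rw [List.cons_append, eval_cons, eval_append, eval_append,
              eval_singleton, eval_singleton, map_mul]
            group
          have hfin' : IsOfFinOrder (eval (m ++ [⟨ib, xc * xb⟩])) := by
            obtain ⟨k, hk0, hk⟩ := hfin.exists_pow_eq_one
            rw [← hconj]
            refine isOfFinOrder_iff_pow_eq_one.2 ⟨k, hk0, ?_⟩
            rw [conjpow, hk, mul_one, inv_mul_cancel]
          have hlen : (m ++ [(⟨ib, xc * xb⟩ : (b : Bool) × Fac b)]).length ≤ n := by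
            have h1 := hrl
            simp only [List.length_cons, List.length_append, List.length_singleton] at h1 hl ⊢
            omega
          obtain ⟨i, x, u, hu⟩ := ih _ hlen hfin'
          refine ⟨i, x, PushoutI.of (φ := phi) ib xb * u, ?_⟩
          have : eval l = (PushoutI.of (φ := phi) ib xb) * eval (m ++ [⟨ib, xc * xb⟩]) *
              (PushoutI.of (φ := phi) ib xb)⁻¹ := by
            rw [← hconj]; group
          rw [this, hu]
          group
        · -- infinite order, contradiction
          exfalso
          obtain ⟨k, hk0, hk⟩ := hfin.exists_pow_eq_one
          have hred' : IsRed ((bb :: m) ++ [cc]) := by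
            rw [List.cons_append]; exact hred
          apply growth hbc hred' k hk0
          rw [List.cons_append, hre, hk]

theorem torsion_conj (g : P) (hg : IsOfFinOrder g) :
    ∃ (i : Bool) (x : Fac i) (u : P), g = u * PushoutI.of (φ := phi) i x * u⁻¹ := by
  obtain ⟨l, hl⟩ := eval_surj g
  subst hl
  exact torsion_aux l.length l le_rfl hg


/-! ### The character `P → Multiplicative (ZMod 6)` -/

def psiB : B →* Multiplicative (ZMod 6) :=
  AddMonoidHom.toMultiplicative (Int.castAddHom (ZMod 6))

def fchi : (b : Bool) → (Fac b →* Multiplicative (ZMod 6))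
  | false => 1
  | true => psiB

lemma fchi_comp : ∀ b, (fchi b).comp (phi b) = (1 : Multiplicative ℤ →* Multiplicative (ZMod 6)) := by
  intro b
  cases b with
  | false => rfl
  | true =>
    apply MonoidHom.ext_mint
    show psiB ((ofAdd (6:ℤ)) ^ toAdd (ofAdd (1:ℤ))) = 1
    simp only [toAdd_ofAdd, zpow_one]
    show ofAdd (((6:ℤ) : ZMod 6)) = 1
    decide

def chiP : P →* Multiplicative (ZMod 6) :=
  PushoutI.lift fchi 1 fchi_comp

lemma chiP_of_false (a : A) : chiP (PushoutI.of (φ := phi) false a) = 1 := by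
  rw [chiP, PushoutI.lift_of]
  rfl

lemma chiP_of_true (t : B) : chiP (PushoutI.of (φ := phi) true t) = psiB t := by
  rw [chiP, PushoutI.lift_of]
  rfl

lemma chiP_ofB (t : B) : chiP (ofB t) = psiB t := chiP_of_true t

lemma chiP_torsion (g : P) (hg : IsOfFinOrder g) : chiP g = 1 := by
  obtain ⟨i, x, u, rfl⟩ := torsion_conj g hg
  have hx : IsOfFinOrder (PushoutI.of (φ := phi) i x) := by
    obtain ⟨k, hk0, hk⟩ := hg.exists_pow_eq_one
    refine isOfFinOrder_iff_pow_eq_one.2 ⟨k, hk0, ?_⟩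
    have h2 : (u⁻¹ * (u * PushoutI.of (φ := phi) i x * u⁻¹) * u) ^ k = u⁻¹ * 1 * u := by
      rw [conjpow, hk]
    simpa [mul_assoc] using h2
  have hmain : chiP (PushoutI.of (φ := phi) i x) = 1 := by
    cases i with
    | false => exact chiP_of_false x
    | true =>
      have hx1 : x = 1 := by
        obtain ⟨k, hk0, hk⟩ := hx.exists_pow_eq_one
        rw [← map_pow] at hk
        have h1 : x ^ k = 1 :=
          PushoutI.of_injective phi_inj true (by rw [hk, map_one])
        have h2 : (show B from x) ^ k = (1 : B) := h1
        have h3 : (k : ℤ) • toAdd (show B from x) = 0 := by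
          have := congrArg toAdd h2
          simpa [toAdd_pow] using this
        have hk' : (k : ℤ) ≠ 0 := by exact_mod_cast hk0.ne'
        have h4 : toAdd (show B from x) = 0 := by
          rcases smul_eq_zero.1 h3 with h | h
          · exact absurd h hk'
          · exact h
        show (show B from x) = (1 : B)
        exact toAdd.injective (by simpa using h4)
      rw [hx1, map_one, map_one]
  rw [map_mul, map_mul, hmain, map_inv]
  group

/-! ### The map from the presented group -/

def fgen : Fin 3 → P :=
  ![ofA (CoprodI.of a0), ofA (CoprodI.of b0), ofB (ofAdd (1 : ℤ))]

lemma a0_sq : a0 * a0 = 1 := by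
  show (ofAdd (1 : ZMod 2) : C2) * ofAdd (1 : ZMod 2) = 1
  decide

lemma b0_cube : b0 * b0 * b0 = 1 := by
  show (ofAdd (1 : ZMod 3) : C3) * ofAdd (1 : ZMod 3) * ofAdd (1 : ZMod 3) = 1
  decide

lemma fgen_rels : ∀ r ∈ chiVyaRels, FreeGroup.lift fgen r = 1 := by
  intro r hr
  rcases hr with hr | hr | hr
  · subst hr
    rw [map_pow, FreeGroup.lift_apply_of]
    show (ofA (CoprodI.of a0)) ^ 2 = 1
    have h1 : (CoprodI.of a0 : A) * CoprodI.of a0 = 1 := by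
      rw [← MonoidHom.map_mul, a0_sq, MonoidHom.map_one]
    rw [pow_two, ← map_mul, h1, map_one]
  · subst hr
    rw [map_pow, FreeGroup.lift_apply_of]
    show (ofA (CoprodI.of b0)) ^ 3 = 1
    have h1 : (CoprodI.of b0 : A) * CoprodI.of b0 * CoprodI.of b0 = 1 := by
      rw [← MonoidHom.map_mul, ← MonoidHom.map_mul, b0_cube, MonoidHom.map_one]
    rw [pow_succ, pow_two, ← map_mul, ← map_mul, h1, map_one]
  · rw [Set.mem_singleton_iff] at hr
    subst hr
    rw [map_mul, map_mul, map_zpow, FreeGroup.lift_apply_of, FreeGroup.lift_apply_of, FreeGroup.lift_apply_of]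
    show ofA (CoprodI.of a0) * ofA (CoprodI.of b0) * (ofB (ofAdd (1:ℤ))) ^ (-6 : ℤ) = 1
    rw [← map_mul, ← map_zpow]
    have h1 : (CoprodI.of a0 * CoprodI.of b0 : A) = phi false (ofAdd (1:ℤ)) := by
      show w0 = w0 ^ (1:ℤ)
      rw [zpow_one]
    have h2 : (ofAdd (1:ℤ)) ^ (-6:ℤ) = (ofAdd ((-6):ℤ) : B) := by
      apply toAdd.injective
      simp
    rw [h1, h2]
    have h4 : ofA (phi false (ofAdd (1:ℤ))) = ofB (phi true (ofAdd (1:ℤ))) :=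
      (PushoutI.of_apply_eq_base phi false _).trans
        (PushoutI.of_apply_eq_base phi true _).symm
    rw [h4]
    have h5 : phi true (ofAdd (1:ℤ)) = (ofAdd (6:ℤ) : B) := by
      show zpowersHom B (ofAdd (6:ℤ)) (ofAdd (1:ℤ)) = (ofAdd (6:ℤ) : B)
      rw [zpowersHom_apply]
      simp
    rw [h5, ← map_mul]
    have h6 : (ofAdd (6:ℤ) : B) * ofAdd ((-6):ℤ) = 1 := by
      apply toAdd.injective
      simp
    rw [h6, map_one]

def toP : PresentedGroup chiVyaRels →* P :=
  PresentedGroup.toGroup fgen_rels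

/-! ### Endgame -/

def xG : PresentedGroup chiVyaRels := PresentedGroup.of 0
def yG : PresentedGroup chiVyaRels := PresentedGroup.of 1
def zG : PresentedGroup chiVyaRels := PresentedGroup.of 2

lemma relG {r : FreeGroup (Fin 3)} (hr : r ∈ chiVyaRels) :
    PresentedGroup.mk chiVyaRels r = 1 :=
  (QuotientGroup.eq_one_iff _).2 (Subgroup.subset_normalClosure hr)

lemma xG_sq : xG ^ 2 = 1 := by
  have := relG (r := FreeGroup.of 0 ^ 2) (Or.inl rfl)
  rw [map_pow] at this
  exact this

lemma yG_cube : yG ^ 3 = 1 := by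
  have := relG (r := FreeGroup.of 1 ^ 3) (Or.inr (Or.inl rfl))
  rw [map_pow] at this
  exact this

lemma xyz_rel : xG * yG * zG ^ (-6 : ℤ) = 1 := by
  have := relG (r := FreeGroup.of 0 * FreeGroup.of 1 * (FreeGroup.of 2) ^ (-6 : ℤ))
    (Or.inr (Or.inr rfl))
  rw [map_mul, map_mul, map_zpow] at this
  exact this

lemma xy_eq_z6 : xG * yG = zG ^ (6 : ℕ) := by
  have h := xyz_rel
  have h2 : xG * yG = (zG ^ (-6:ℤ))⁻¹ := by
    rw [eq_inv_iff_mul_eq_one]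
    exact h
  rw [h2, ← zpow_neg, neg_neg]
  norm_cast

lemma xG_torsion : IsOfFinOrder xG :=
  isOfFinOrder_iff_pow_eq_one.2 ⟨2, by norm_num, xG_sq⟩

lemma yG_torsion : IsOfFinOrder yG :=
  isOfFinOrder_iff_pow_eq_one.2 ⟨3, by norm_num, yG_cube⟩

def chiG : PresentedGroup chiVyaRels →* Multiplicative (ZMod 6) :=
  chiP.comp toP

lemma chiG_torsion {g : PresentedGroup chiVyaRels} (hg : IsOfFinOrder g) : chiG g = 1 :=
  chiP_torsion _ (toP.isOfFinOrder hg)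

lemma chiG_z : chiG zG = ofAdd (1 : ZMod 6) := by
  show chiP (toP (PresentedGroup.of 2)) = _
  rw [toP, PresentedGroup.toGroup.of]
  show chiP (ofB (ofAdd (1:ℤ))) = _
  rw [chiP_ofB]
  show ofAdd (((1:ℤ) : ZMod 6)) = ofAdd (1 : ZMod 6)
  decide

lemma closure_le_ker :
    Subgroup.normalClosure {g : PresentedGroup chiVyaRels | IsOfFinOrder g} ≤ chiG.ker :=
  Subgroup.normalClosure_le_normal (fun g hg => chiG_torsion hg)

end ChiVya

open ChiVya in
/-- For `G = ⟨x,y,z | x², y³, x·y·z⁻⁶⟩`, the quotient of `G` by the normal closure of its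
set of torsion elements is not torsion-free: it has a nontrivial element of finite order. -/
theorem quotient_by_torsion_not_torsionFree :
    ∃ x : PresentedGroup chiVyaRels ⧸
        Subgroup.normalClosure {g : PresentedGroup chiVyaRels | IsOfFinOrder g},
      x ≠ 1 ∧ IsOfFinOrder x := by
  refine ⟨QuotientGroup.mk zG, ?_, ?_⟩
  · intro h
    have hz : zG ∈ Subgroup.normalClosure {g : PresentedGroup chiVyaRels | IsOfFinOrder g} :=
      (QuotientGroup.eq_one_iff _).1 h
    have : chiG zG = 1 := closure_le_ker hz
    rw [chiG_z] at this
    exact absurd this (by decide)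
  · refine isOfFinOrder_iff_pow_eq_one.2 ⟨6, by norm_num, ?_⟩
    have h1 : (QuotientGroup.mk zG : PresentedGroup chiVyaRels ⧸
        Subgroup.normalClosure {g : PresentedGroup chiVyaRels | IsOfFinOrder g}) ^ 6
        = QuotientGroup.mk (zG ^ (6:ℕ)) := rfl
    rw [h1, ← xy_eq_z6, QuotientGroup.mk_mul]
    have hx1 : (QuotientGroup.mk xG : PresentedGroup chiVyaRels ⧸
        Subgroup.normalClosure {g : PresentedGroup chiVyaRels | IsOfFinOrder g}) = 1 :=
      (QuotientGroup.eq_one_iff _).2 (Subgroup.subset_normalClosure xG_torsion)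
    have hy1 : (QuotientGroup.mk yG : PresentedGroup chiVyaRels ⧸
        Subgroup.normalClosure {g : PresentedGroup chiVyaRels | IsOfFinOrder g}) = 1 :=
      (QuotientGroup.eq_one_iff _).2 (Subgroup.subset_normalClosure yG_torsion)
    rw [hx1, hy1, mul_one]
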